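/- Let S be a compact (in the weak* topology) semitopological semigroup structure on the state space of a unital C*-algebra, with separately weak*-continuous multiplication ⋆, and let μ be a state. Then the sequence of Cesàro averages ωₙ = (1/n)(μ + μ² + ⋯ + μⁿ) has every weak* cluster point φ satisfying μ ⋆ φ = φ ⋆ μ = φ ⋆ φ = φ. In particular if the cluster point is unique (e.g. equal to 0 in a non-unital setting, or to a unique invariant state), the Cesàro averages weak*-converge. -/

import Mathlib

open scoped ComplexOrder
open Filter NormedSpace Topology

/-- The state space of a unital C*-algebra `E`, as a subset of the dual. -/
def IsStateFn {E : Type*} [CStarAlgebra E] [PartialOrder E] [StarOrderedRing E]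
    (f : StrongDual ℂ E) : Prop :=
  ‖f‖ = 1 ∧ f 1 = 1 ∧ ∀ x : E, 0 ≤ x → 0 ≤ f x

set_option maxHeartbeats 1000000 in
/-- Let the state space of a unital C*-algebra carry a compact (weak*) semitopological
semigroup structure `⋆` (associative, separately weak*-continuous, states multiply to
states), and let `μ` be a state.  Then every weak* cluster point `φ` of the Cesàro averages
`ωₙ = (1/n)(μ + μ² + ⋯ + μⁿ)` satisfies `μ ⋆ φ = φ ⋆ μ = φ ⋆ φ = φ`.  In particular, if the
cluster point is unique, the Cesàro averages weak*-converge to it. -/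
theorem cesaro_cluster_points_in_state_semigroup
    {E : Type*} [CStarAlgebra E] [PartialOrder E] [StarOrderedRing E]
    (mul : StrongDual ℂ E → StrongDual ℂ E → StrongDual ℂ E)
    -- states form a semigroup under ⋆
    (h_states : ∀ f g, IsStateFn f → IsStateFn g → IsStateFn (mul f g))
    -- bilinearity (⋆ is a contractive bilinear multiplication)
    (h_add_l : ∀ f g k, mul (f + g) k = mul f k + mul g k)
    (h_add_r : ∀ f g k, mul k (f + g) = mul k f + mul k g)
    (h_smul_l : ∀ (c : ℂ) f k, mul (c • f) k = c • mul f k)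
    (h_smul_r : ∀ (c : ℂ) f k, mul k (c • f) = c • mul k f)
    (h_contr : ∀ f g, ‖mul f g‖ ≤ ‖f‖ * ‖g‖)
    -- associativity
    (h_assoc : ∀ f g k, mul (mul f g) k = mul f (mul g k))
    -- separate weak*-continuity on the (weak*-compact) state space
    (h_cont_l : ∀ ν : StrongDual ℂ E, ContinuousOn
      (fun f : WeakDual ℂ E => StrongDual.toWeakDual (mul (WeakDual.toStrongDual f) ν))
      {f : WeakDual ℂ E | IsStateFn (WeakDual.toStrongDual f)})
    (h_cont_r : ∀ ν : StrongDual ℂ E, ContinuousOn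
      (fun f : WeakDual ℂ E => StrongDual.toWeakDual (mul ν (WeakDual.toStrongDual f)))
      {f : WeakDual ℂ E | IsStateFn (WeakDual.toStrongDual f)})
    -- μ is a state, with convolution powers μᵏ
    (μ : StrongDual ℂ E) (hμ : IsStateFn μ)
    (pw : ℕ → StrongDual ℂ E) (hpw1 : pw 1 = μ) (hpw : ∀ n, pw (n + 1) = mul (pw n) μ) :
    (∀ φ : StrongDual ℂ E,
      MapClusterPt (StrongDual.toWeakDual φ) atTop
        (fun n : ℕ => StrongDual.toWeakDual ((n : ℂ)⁻¹ • ∑ k ∈ Finset.Icc 1 n, pw k)) →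
      mul μ φ = φ ∧ mul φ μ = φ ∧ mul φ φ = φ) ∧
    (∀ φ₀ : StrongDual ℂ E,
      (∀ φ : StrongDual ℂ E,
        MapClusterPt (StrongDual.toWeakDual φ) atTop
          (fun n : ℕ => StrongDual.toWeakDual ((n : ℂ)⁻¹ • ∑ k ∈ Finset.Icc 1 n, pw k)) → φ = φ₀) →
      Tendsto (fun n : ℕ => StrongDual.toWeakDual ((n : ℂ)⁻¹ • ∑ k ∈ Finset.Icc 1 n, pw k))
        atTop (nhds (StrongDual.toWeakDual φ₀))) := by
  classical
  set ω : ℕ → StrongDual ℂ E := fun n => (n : ℂ)⁻¹ • ∑ k ∈ Finset.Icc 1 n, pw k with hω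
  -- E is nontrivial
  have hE : Nontrivial E := by
    by_contra h
    have hs : Subsingleton E := not_nontrivial_iff_subsingleton.mp h
    have hμ0 : μ = 0 := by
      ext x
      rw [Subsingleton.elim x 0]
      simp
    rw [hμ0] at hμ
    simpa using hμ.1
  have hone : ‖(1 : E)‖ = 1 := CStarRing.norm_one
  have key : ∀ f : StrongDual ℂ E, WeakDual.toStrongDual (StrongDual.toWeakDual f) = f := fun f =>
    StrongDual.toWeakDual.symm_apply_apply f
  -- a positive unital functional of norm ≤ 1 is a state
  have state_of : ∀ f : StrongDual ℂ E, ‖f‖ ≤ 1 → f 1 = 1 → (∀ x : E, 0 ≤ x → 0 ≤ f x) →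
      IsStateFn f := by
    intro f h1 h2 h3
    refine ⟨le_antisymm h1 ?_, h2, h3⟩
    have hle := f.le_opNorm 1
    rw [h2, hone, mul_one] at hle
    simpa using hle
  -- all powers are states
  have hpw_state0 : ∀ k, IsStateFn (pw (k + 1)) := by
    intro k
    induction k with
    | zero => simpa [hpw1] using hμ
    | succ n ih =>
      rw [hpw]
      exact h_states _ _ ih hμ
  have hpw_state : ∀ k, 1 ≤ k → IsStateFn (pw k) := by
    intro k hk
    obtain ⟨m, rfl⟩ := Nat.exists_eq_add_of_le hk
    rw [Nat.add_comm 1 m]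
    exact hpw_state0 m
  -- left multiplication by μ shifts powers
  have hμpw : ∀ k, 1 ≤ k → mul μ (pw k) = pw (k + 1) := by
    intro k hk
    induction k with
    | zero => omega
    | succ n ih =>
      rcases Nat.lt_or_ge 1 (n + 1) with h | h
      · have hn : 1 ≤ n := by omega
        rw [hpw n, ← h_assoc, ih hn, ← hpw]
      · have hn : n = 0 := by omega
        subst hn
        rw [hpw1, hpw 1, hpw1]
  -- mul is linear in each argument, hence commutes with sums
  have mul_sum_r : ∀ (ν : StrongDual ℂ E) (s : Finset ℕ) (g : ℕ → StrongDual ℂ E),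
      mul ν (∑ k ∈ s, g k) = ∑ k ∈ s, mul ν (g k) := by
    intro ν s g
    let L : StrongDual ℂ E →ₗ[ℂ] StrongDual ℂ E :=
      { toFun := mul ν
        map_add' := fun a b => h_add_r a b ν
        map_smul' := fun c a => h_smul_r c a ν }
    exact map_sum L g s
  have mul_sum_l : ∀ (ν : StrongDual ℂ E) (s : Finset ℕ) (g : ℕ → StrongDual ℂ E),
      mul (∑ k ∈ s, g k) ν = ∑ k ∈ s, mul (g k) ν := by
    intro ν s g
    let L : StrongDual ℂ E →ₗ[ℂ] StrongDual ℂ E :=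
      { toFun := fun f => mul f ν
        map_add' := fun a b => h_add_l a b ν
        map_smul' := fun c a => h_smul_l c a ν }
    exact map_sum L g s
  -- the Cesàro averages are states
  have hω_state : ∀ n, 1 ≤ n → IsStateFn (ω n) := by
    intro n hn
    have hcard : (Finset.Icc 1 n).card = n := by
      rw [Nat.card_Icc]; omega
    apply state_of
    · rw [hω]
      simp only
      rw [norm_smul]
      have h1 : ‖∑ k ∈ Finset.Icc 1 n, pw k‖ ≤ (n : ℝ) := by
        calc ‖∑ k ∈ Finset.Icc 1 n, pw k‖ ≤ ∑ k ∈ Finset.Icc 1 n, ‖pw k‖ :=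
              norm_sum_le _ _
        _ = ∑ k ∈ Finset.Icc 1 n, (1 : ℝ) := by
              refine Finset.sum_congr rfl fun k hk => ?_
              exact (hpw_state k (Finset.mem_Icc.mp hk).1).1
        _ = (n : ℝ) := by rw [Finset.sum_const, hcard]; simp
      have h2 : ‖((n : ℂ))⁻¹‖ = (n : ℝ)⁻¹ := by
        rw [norm_inv, Complex.norm_natCast]
      rw [h2]
      calc ((n : ℝ))⁻¹ * ‖∑ k ∈ Finset.Icc 1 n, pw k‖ ≤ ((n : ℝ))⁻¹ * n := by
            gcongr
      _ = 1 := by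
            rw [inv_mul_cancel₀]
            exact_mod_cast (by omega : n ≠ 0)
    · rw [hω]
      simp only [ContinuousLinearMap.smul_apply, ContinuousLinearMap.sum_apply, smul_eq_mul]
      have : ∑ k ∈ Finset.Icc 1 n, (pw k) 1 = (n : ℂ) := by
        rw [Finset.sum_congr rfl fun k hk => (hpw_state k (Finset.mem_Icc.mp hk).1).2.1]
        rw [Finset.sum_const, hcard]
        simp
      rw [this, inv_mul_cancel₀]
      exact_mod_cast (by omega : n ≠ 0)
    · intro x hx
      rw [hω]
      simp only [ContinuousLinearMap.smul_apply, ContinuousLinearMap.sum_apply, smul_eq_mul]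
      have hinv : (0 : ℂ) ≤ ((n : ℂ))⁻¹ := by
        rw [show ((n : ℂ))⁻¹ = ((((n : ℝ))⁻¹ : ℝ) : ℂ) by push_cast; ring]
        exact Complex.zero_le_real.mpr (by positivity)
      exact mul_nonneg hinv (Finset.sum_nonneg fun k hk =>
        (hpw_state k (Finset.mem_Icc.mp hk).1).2.2 x hx)
  -- shift identity for sums of powers
  have hsum_shift : ∀ n, 1 ≤ n → ∑ k ∈ Finset.Icc 1 n, pw (k + 1)
      = ∑ k ∈ Finset.Icc 1 n, pw k + pw (n + 1) - pw 1 := by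
    intro n hn
    induction n with
    | zero => omega
    | succ m ih =>
      rcases Nat.lt_or_ge 1 (m + 1) with h | h
      · have hm : 1 ≤ m := by omega
        rw [Finset.sum_Icc_succ_top (by omega : 1 ≤ m + 1),
          Finset.sum_Icc_succ_top (by omega : 1 ≤ m + 1), ih hm]
        abel
      · have hm : m = 0 := by omega
        subst hm
        simp only [Finset.Icc_self, Finset.sum_singleton]
        abel
  -- the key approximate invariance identities
  have hmulμω : ∀ n, 1 ≤ n → mul μ (ω n) = ω n + (n : ℂ)⁻¹ • (pw (n + 1) - pw 1) := by
    intro n hn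
    have h1 : mul μ (ω n) = (n : ℂ)⁻¹ • ∑ k ∈ Finset.Icc 1 n, mul μ (pw k) := by
      rw [hω]
      simp only
      rw [h_smul_r, mul_sum_r]
    rw [h1, Finset.sum_congr rfl (fun k hk => hμpw k (Finset.mem_Icc.mp hk).1),
      hsum_shift n hn, hω]
    simp only
    rw [smul_sub, smul_add, smul_sub]
    abel
  have hmulωμ : ∀ n, 1 ≤ n → mul (ω n) μ = ω n + (n : ℂ)⁻¹ • (pw (n + 1) - pw 1) := by
    intro n hn
    have h1 : mul (ω n) μ = (n : ℂ)⁻¹ • ∑ k ∈ Finset.Icc 1 n, mul (pw k) μ := by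
      rw [hω]
      simp only
      rw [h_smul_l, mul_sum_l]
    rw [h1, Finset.sum_congr rfl (fun k _ => (hpw k).symm),
      hsum_shift n hn, hω]
    simp only
    rw [smul_sub, smul_add, smul_sub]
    abel
  -- the error term tends to zero in the weak* topology
  have herr : Tendsto (fun n : ℕ => StrongDual.toWeakDual ((n : ℂ)⁻¹ • (pw (n + 1) - pw 1)))
      atTop (𝓝 0) := by
    have h0 : Tendsto (fun n : ℕ => ((n : ℂ)⁻¹ • (pw (n + 1) - pw 1) : StrongDual ℂ E))
        atTop (𝓝 0) := by
      apply squeeze_zero_norm (a := fun n : ℕ => (1 / (n : ℝ)) * 2)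
      · intro n
        rw [norm_smul, norm_inv, Complex.norm_natCast, ← one_div]
        gcongr
        calc ‖pw (n + 1) - pw 1‖ ≤ ‖pw (n + 1)‖ + ‖pw 1‖ := norm_sub_le _ _
        _ = 2 := by
              rw [(hpw_state (n + 1) (by omega)).1, (hpw_state 1 le_rfl).1]; norm_num
      · simpa using (tendsto_one_div_atTop_nhds_zero_nat (𝕜 := ℝ)).mul_const 2
    have := (NormedSpace.Dual.toWeakDual_continuous.tendsto (0 : StrongDual ℂ E)).comp h0
    simpa [Function.comp_def] using this
  have hfun : (fun n : ℕ => StrongDual.toWeakDual ((n : ℂ)⁻¹ • ∑ k ∈ Finset.Icc 1 n, pw k))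
      = fun n : ℕ => StrongDual.toWeakDual (ω n) := by
    funext n
    rw [hω]
  rw [hfun]
  constructor
  · -- every cluster point is invariant and idempotent
    intro φ hcl
    rw [mapClusterPt_iff_ultrafilter] at hcl
    obtain ⟨V, hVle, hVt⟩ := hcl
    have hev1 : ∀ᶠ n in (V : Filter ℕ), 1 ≤ n := hVle (eventually_ge_atTop 1)
    -- φ is a state
    have hφ : IsStateFn φ := by
      apply state_of
      · have hcb : IsClosed (WeakDual.toStrongDual ⁻¹' Metric.closedBall (0 : StrongDual ℂ E) 1) :=
          WeakDual.isClosed_closedBall 0 1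
        have hmem : StrongDual.toWeakDual φ ∈
            WeakDual.toStrongDual ⁻¹' Metric.closedBall (0 : StrongDual ℂ E) 1 := by
          refine hcb.mem_of_tendsto hVt ?_
          filter_upwards [hev1] with n hn
          simp only [Set.mem_preimage, Metric.mem_closedBall, dist_zero_right]
          exact le_of_eq (hω_state n hn).1
        simpa [dist_zero_right] using hmem
      · have ht1 : Tendsto (fun n : ℕ => (StrongDual.toWeakDual (ω n)) (1 : E)) V
            (𝓝 ((StrongDual.toWeakDual φ) (1 : E))) :=
          ((WeakDual.eval_continuous (1 : E)).tendsto _).comp hVt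
        have heq : (fun n : ℕ => (StrongDual.toWeakDual (ω n)) (1 : E)) =ᶠ[(V : Filter ℕ)]
            fun _ => (1 : ℂ) := by
          filter_upwards [hev1] with n hn
          exact (hω_state n hn).2.1
        have hlim : (StrongDual.toWeakDual φ) (1 : E) = 1 :=
          tendsto_nhds_unique (ht1.congr' heq) tendsto_const_nhds
        exact hlim
      · intro x hx
        have ht1 : Tendsto (fun n : ℕ => (StrongDual.toWeakDual (ω n)) x) V
            (𝓝 ((StrongDual.toWeakDual φ) x)) :=
          ((WeakDual.eval_continuous x).tendsto _).comp hVt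
        refine ge_of_tendsto ht1 ?_
        filter_upwards [hev1] with n hn
        exact (hω_state n hn).2.2 x hx
    -- set-up for applying the continuity hypotheses
    have hΦS : StrongDual.toWeakDual φ ∈ {f : WeakDual ℂ E | IsStateFn (WeakDual.toStrongDual f)} := by
      simp only [Set.mem_setOf_eq, key]
      exact hφ
    have hmemS : ∀ᶠ n in (V : Filter ℕ), StrongDual.toWeakDual (ω n) ∈
        {f : WeakDual ℂ E | IsStateFn (WeakDual.toStrongDual f)} := by
      filter_upwards [hev1] with n hn
      simp only [Set.mem_setOf_eq, key]
      exact hω_state n hn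
    have htW : Tendsto (fun n : ℕ => StrongDual.toWeakDual (ω n)) V
        (𝓝[{f : WeakDual ℂ E | IsStateFn (WeakDual.toStrongDual f)}] (StrongDual.toWeakDual φ)) :=
      tendsto_nhdsWithin_of_tendsto_nhds_of_eventually_within _ hVt hmemS
    -- μ ⋆ φ = φ
    have ha : mul μ φ = φ := by
      have t1 : Tendsto (fun n : ℕ => StrongDual.toWeakDual (mul μ (ω n))) V
          (𝓝 (StrongDual.toWeakDual (mul μ φ))) := by
        have t0 := (((h_cont_r μ) (StrongDual.toWeakDual φ) hΦS).tendsto).comp htW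
        simp only [Function.comp_def, key] at t0
        exact t0
      have t2 : Tendsto (fun n : ℕ => StrongDual.toWeakDual (mul μ (ω n))) V
          (𝓝 (StrongDual.toWeakDual φ)) := by
        have hsum : Tendsto (fun n : ℕ => StrongDual.toWeakDual (ω n) +
            StrongDual.toWeakDual ((n : ℂ)⁻¹ • (pw (n + 1) - pw 1))) V
            (𝓝 (StrongDual.toWeakDual φ + 0)) :=
          hVt.add (herr.mono_left hVle)
        rw [add_zero] at hsum
        refine hsum.congr' ?_
        filter_upwards [hev1] with n hn
        rw [hmulμω n hn, map_add]
      exact StrongDual.toWeakDual.injective (tendsto_nhds_unique t1 t2)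
    -- φ ⋆ μ = φ
    have hb : mul φ μ = φ := by
      have t1 : Tendsto (fun n : ℕ => StrongDual.toWeakDual (mul (ω n) μ)) V
          (𝓝 (StrongDual.toWeakDual (mul φ μ))) := by
        have t0 := (((h_cont_l μ) (StrongDual.toWeakDual φ) hΦS).tendsto).comp htW
        simp only [Function.comp_def, key] at t0
        exact t0
      have t2 : Tendsto (fun n : ℕ => StrongDual.toWeakDual (mul (ω n) μ)) V
          (𝓝 (StrongDual.toWeakDual φ)) := by
        have hsum : Tendsto (fun n : ℕ => StrongDual.toWeakDual (ω n) +
            StrongDual.toWeakDual ((n : ℂ)⁻¹ • (pw (n + 1) - pw 1))) V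
            (𝓝 (StrongDual.toWeakDual φ + 0)) :=
          hVt.add (herr.mono_left hVle)
        rw [add_zero] at hsum
        refine hsum.congr' ?_
        filter_upwards [hev1] with n hn
        rw [hmulωμ n hn, map_add]
      exact StrongDual.toWeakDual.injective (tendsto_nhds_unique t1 t2)
    -- φ ⋆ φ = φ
    have hc : mul φ φ = φ := by
      have hpwφ : ∀ k, 1 ≤ k → mul (pw k) φ = φ := by
        intro k hk
        induction k with
        | zero => omega
        | succ n ih =>
          rcases Nat.lt_or_ge 1 (n + 1) with h | h
          · have hn : 1 ≤ n := by omega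
            rw [hpw n, h_assoc, ha, ih hn]
          · have hn : n = 0 := by omega
            subst hn
            rw [hpw1, ha]
      have hωφ : ∀ n, 1 ≤ n → mul (ω n) φ = φ := by
        intro n hn
        have h1 : mul (ω n) φ = (n : ℂ)⁻¹ • ∑ k ∈ Finset.Icc 1 n, mul (pw k) φ := by
          rw [hω]
          simp only
          rw [h_smul_l, mul_sum_l]
        rw [h1, Finset.sum_congr rfl (fun k hk => hpwφ k (Finset.mem_Icc.mp hk).1),
          Finset.sum_const, Nat.card_Icc, Nat.add_sub_cancel,
          ← Nat.cast_smul_eq_nsmul ℂ, smul_smul, inv_mul_cancel₀, one_smul]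
        exact_mod_cast (by omega : n ≠ 0)
      have t1 : Tendsto (fun n : ℕ => StrongDual.toWeakDual (mul (ω n) φ)) V
          (𝓝 (StrongDual.toWeakDual (mul φ φ))) := by
        have t0 := (((h_cont_l φ) (StrongDual.toWeakDual φ) hΦS).tendsto).comp htW
        simp only [Function.comp_def, key] at t0
        exact t0
      have t2 : Tendsto (fun n : ℕ => StrongDual.toWeakDual (mul (ω n) φ)) V
          (𝓝 (StrongDual.toWeakDual φ)) := by
        have heq2 : (fun _ : ℕ => StrongDual.toWeakDual φ) =ᶠ[(V : Filter ℕ)]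
            fun n : ℕ => StrongDual.toWeakDual (mul (ω n) φ) := by
          filter_upwards [hev1] with n hn
          rw [hωφ n hn]
        exact Tendsto.congr' heq2 tendsto_const_nhds
      exact StrongDual.toWeakDual.injective (tendsto_nhds_unique t1 t2)
    exact ⟨ha, hb, hc⟩
  · -- uniqueness of the cluster point implies convergence
    intro φ₀ huniq
    rw [tendsto_iff_ultrafilter]
    intro V hVle
    have hK : IsCompact (WeakDual.toStrongDual ⁻¹' Metric.closedBall (0 : StrongDual ℂ E) 1) :=
      WeakDual.isCompact_closedBall (𝕜 := ℂ) (E := E) 0 1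
    have hmem : (WeakDual.toStrongDual ⁻¹' Metric.closedBall (0 : StrongDual ℂ E) 1) ∈
        Ultrafilter.map (fun n : ℕ => StrongDual.toWeakDual (ω n)) V := by
      rw [Ultrafilter.mem_map]
      apply hVle
      filter_upwards [eventually_ge_atTop 1] with n hn
      simp only [Set.mem_preimage, Metric.mem_closedBall, dist_zero_right]
      exact le_of_eq (hω_state n hn).1
    obtain ⟨x, hxK, hxle⟩ := hK.ultrafilter_le_nhds'
      (Ultrafilter.map (fun n : ℕ => StrongDual.toWeakDual (ω n)) V) hmem
    have hxt : Tendsto (fun n : ℕ => StrongDual.toWeakDual (ω n)) V (𝓝 x) := by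
      have h := hxle
      rw [Ultrafilter.coe_map] at h
      exact h
    have hclx : MapClusterPt x atTop (fun n : ℕ => StrongDual.toWeakDual (ω n)) :=
      mapClusterPt_iff_ultrafilter.mpr ⟨V, hVle, hxt⟩
    have hx' : StrongDual.toWeakDual (WeakDual.toStrongDual x) = x :=
      StrongDual.toWeakDual.apply_symm_apply x
    have hx0 : WeakDual.toStrongDual x = φ₀ := huniq (WeakDual.toStrongDual x) (hx' ▸ hclx)
    have hx : x = StrongDual.toWeakDual φ₀ := by
      rw [← hx0, hx']
    rw [← hx]
    exact hxt
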